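/- Assume the sequence {η^k} generated by Algorithm 1 converges to some point η̄ ∈ ℝⁿ. Then the sequences {w^k} and {x^k} generated by Algorithm 1 converge to a common limit w*, and w* satisfies 0 ∈ ∂(g* ∘ (−I))(w*) + ∂f*(w*); in particular, w* maximizes the dual objective −g*(−w) − f*(w) over w ∈ ℝⁿ. -/

import Mathlib

noncomputable section

open Matrix Filter Topology
open scoped Pointwise

/-- `ℝⁿ` with the Euclidean inner ℝ product and norm. -/
abbrev Vec (n : ℕ) := EuclideanSpace ℝ (Fin n)

/-- Matrix–vector multiplication viewed as a map between Euclidean spaces. -/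
def mulVecE {m n : ℕ} (A : Matrix (Fin m) (Fin n) ℝ) (x : Vec n) : Vec m :=
  (EuclideanSpace.equiv (Fin m) ℝ).symm (A.mulVec (EuclideanSpace.equiv (Fin n) ℝ x))

/-- Subdifferential of an `ℝ ∪ {+∞}`-valued (coded as `EReal`-valued) function:
`∂h(x) = {u : ∀ z, h z ≥ h x + ⟨u, z − x⟩}`. -/
def subdiffE {n : ℕ} (f : Vec n → EReal) (x : Vec n) : Set (Vec n) :=
  {u | ∀ z, f x + ((inner ℝ u (z - x) : ℝ) : EReal) ≤ f z}

/-- Fenchel conjugate `h*(w) = sup_z (⟨w, z⟩ − h z)`. -/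
def fenchelE {n : ℕ} (f : Vec n → EReal) (w : Vec n) : EReal :=
  ⨆ z, ((inner ℝ w z : ℝ) : EReal) - f z

/-- Proper: never `−∞` (it takes values in `ℝ ∪ {+∞}`) and not identically `+∞`. -/
def ProperE {n : ℕ} (f : Vec n → EReal) : Prop :=
  (∀ x, f x ≠ ⊥) ∧ ∃ x, f x ≠ ⊤

/-- Convexity for `EReal`-valued functions. -/
def ConvexE {n : ℕ} (f : Vec n → EReal) : Prop :=
  ∀ x y : Vec n, ∀ a b : ℝ, 0 ≤ a → 0 ≤ b → a + b = 1 →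
    f (a • x + b • y) ≤ (a : EReal) * f x + (b : EReal) * f y

/-- `p` is a proximal point of `h` with parameter `s` at `x`, i.e. a minimizer of
`z ↦ h z + (1/(2 s)) ‖z − x‖²`; for proper convex lsc `h` it is the unique such point,
so this characterizes `p = Prox_{s h}(x)`. -/
def IsProxPt {n : ℕ} (h : Vec n → EReal) (s : ℝ) (p x : Vec n) : Prop :=
  ∀ z, h p + ((1 / (2 * s) * ‖p - x‖ ^ 2 : ℝ) : EReal)
      ≤ h z + ((1 / (2 * s) * ‖z - x‖ ^ 2 : ℝ) : EReal)

/- ### Auxiliary lemmas -/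

lemma mulVecE_add {m n : ℕ} (A : Matrix (Fin m) (Fin n) ℝ) (u v : Vec n) :
    mulVecE A (u + v) = mulVecE A u + mulVecE A v := by
  simp [mulVecE, Matrix.mulVec_add]

lemma mulVecE_sub {m n : ℕ} (A : Matrix (Fin m) (Fin n) ℝ) (u v : Vec n) :
    mulVecE A (u - v) = mulVecE A u - mulVecE A v := by
  simp [mulVecE, Matrix.mulVec_sub]

lemma matE_add {m n : ℕ} (A B : Matrix (Fin m) (Fin n) ℝ) (u : Vec n) :
    mulVecE (A + B) u = mulVecE A u + mulVecE B u := by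
  simp [mulVecE, Matrix.add_mulVec]

lemma matE_mul {k m n : ℕ} (A : Matrix (Fin k) (Fin m) ℝ) (B : Matrix (Fin m) (Fin n) ℝ)
    (u : Vec n) : mulVecE (A * B) u = mulVecE A (mulVecE B u) := by
  simp [mulVecE, Matrix.mulVec_mulVec]
  exact (Matrix.mulVec_mulVec _ _ _).symm

lemma matE_smul_one {n : ℕ} (c : ℝ) (u : Vec n) :
    mulVecE ((c • 1 : Matrix (Fin n) (Fin n) ℝ)) u = c • u := by
  simp [mulVecE, Matrix.smul_mulVec]

lemma matE_one {n : ℕ} (u : Vec n) :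
    mulVecE ((1 : Matrix (Fin n) (Fin n) ℝ)) u = u := by
  simp [mulVecE]

lemma continuous_mulVecE {m n : ℕ} (A : Matrix (Fin m) (Fin n) ℝ) :
    Continuous (mulVecE A) := by
  have h : Continuous A.mulVec := A.mulVecLin.continuous_of_finiteDimensional
  exact ((EuclideanSpace.equiv (Fin m) ℝ).symm.continuous).comp
    (h.comp (EuclideanSpace.equiv (Fin n) ℝ).continuous)

lemma inner_mulVecE_transpose {m n : ℕ} (A : Matrix (Fin m) (Fin n) ℝ) (u : Vec m) (v : Vec n) :
    (inner ℝ (mulVecE Aᵀ u) v : ℝ) = inner ℝ u (mulVecE A v) := by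
  rw [EuclideanSpace.inner_eq_star_dotProduct, EuclideanSpace.inner_eq_star_dotProduct]
  simp [mulVecE, Matrix.mulVec_transpose, Matrix.dotProduct_mulVec, dotProduct_comm]
  exact dotProduct_comm _ _

lemma ereal_le_coe_of_add_coe_le {u : EReal} {a s : ℝ}
    (h : u + (a : EReal) ≤ (s : EReal)) : u ≤ ((s - a : ℝ) : EReal) := by
  have h2 : u + (a:EReal) - (a:EReal) ≤ (s:EReal) - (a:EReal) :=
    EReal.sub_le_sub h le_rfl
  rwa [EReal.add_sub_cancel_right, ← EReal.coe_sub] at h2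

lemma isUnit_det_aux {m n : ℕ} (A : Matrix (Fin m) (Fin n) ℝ) {σ : ℝ} (hσ : 0 < σ) :
    IsUnit (Aᵀ * A + σ • 1 : Matrix (Fin n) (Fin n) ℝ).det := by
  rw [← Matrix.isUnit_iff_isUnit_det, ← Matrix.mulVec_injective_iff_isUnit]
  set N : Matrix (Fin n) (Fin n) ℝ := Aᵀ * A + σ • 1 with hN
  have key : ∀ x : Fin n → ℝ, N.mulVec x = 0 → x = 0 := by
    intro x hx
    have hdot : dotProduct x (N.mulVec x) = 0 := by rw [hx]; simp
    have hexp : dotProduct x (N.mulVec x)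
        = dotProduct (A.mulVec x) (A.mulVec x) + σ * dotProduct x x := by
      rw [hN, Matrix.add_mulVec, dotProduct_add, ← Matrix.mulVec_mulVec,
        Matrix.dotProduct_mulVec, Matrix.vecMul_transpose, Matrix.smul_mulVec,
        Matrix.one_mulVec, dotProduct_smul]
      rfl
    have h1 : 0 ≤ dotProduct (A.mulVec x) (A.mulVec x) :=
      Finset.sum_nonneg fun i _ => mul_self_nonneg _
    have h2 : 0 ≤ dotProduct x x := Finset.sum_nonneg fun i _ => mul_self_nonneg _
    have hxx : dotProduct x x = 0 := by nlinarith
    exact (dotProduct_self_eq_zero).mp hxx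
  intro u v huv
  have h0 : N.mulVec (u - v) = 0 := by rw [Matrix.mulVec_sub, huv, sub_self]
  exact sub_eq_zero.mp (key _ h0)

theorem stmt1 {m n : ℕ}
    (A : Matrix (Fin m) (Fin n) ℝ) (y : Vec m) (σ : ℝ) (hσ : 0 < σ)
    (g : Vec n → EReal) (hg_proper : ProperE g) (hg_convex : ConvexE g)
    (hg_lsc : LowerSemicontinuous g)
    (f : Vec n → ℝ) (hf : ∀ v, f v = (1 / 2) * ‖y - mulVecE A v‖ ^ 2)
    (η q w p x : ℕ → Vec n)
    (hq : ∀ k, q (k + 1) = mulVecE (Aᵀ * A + σ • 1)⁻¹ (mulVecE Aᵀ y + η k))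
    (hw : ∀ k, w (k + 1) = η k - σ • q (k + 1))
    (hp : ∀ k, IsProxPt g σ⁻¹ (p (k + 1)) (σ⁻¹ • ((2 * σ) • q (k + 1) - η k)))
    (hx : ∀ k, x (k + 1) = η k + σ • p (k + 1) - (2 * σ) • q (k + 1))
    (hη : ∀ k, η (k + 1) = η k + (2 * σ) • (p (k + 1) - q (k + 1)))
    (ηbar : Vec n) (hconv : Tendsto η atTop (nhds ηbar)) :
    ∃ wstar : Vec n,
      Tendsto w atTop (nhds wstar) ∧
      Tendsto x atTop (nhds wstar) ∧
      (0 : Vec n) ∈ subdiffE (fun v => fenchelE g (-v)) wstar +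
          subdiffE (fenchelE (fun v => ((f v : ℝ) : EReal))) wstar ∧
      ∀ w' : Vec n,
        -fenchelE g (-w') - fenchelE (fun v => ((f v : ℝ) : EReal)) w' ≤
          -fenchelE g (-wstar) - fenchelE (fun v => ((f v : ℝ) : EReal)) wstar := by
  obtain ⟨hg_nbot, z₀, hz₀⟩ := hg_proper
  have hσ' : σ ≠ 0 := ne_of_gt hσ
  have h2σ : (2*σ) ≠ 0 := by positivity
  have hNdet := isUnit_det_aux A hσ
  set N : Matrix (Fin n) (Fin n) ℝ := Aᵀ * A + σ • 1 with hNdef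
  set qbar : Vec n := mulVecE N⁻¹ (mulVecE Aᵀ y + ηbar) with hqbar
  have hNq : mulVecE N qbar = mulVecE Aᵀ y + ηbar := by
    rw [hqbar, ← matE_mul, Matrix.mul_nonsing_inv _ hNdet, matE_one]
  set wstar : Vec n := ηbar - σ • qbar with hwstar
  -- ### Convergence ###
  have hq1 : Tendsto (fun k => q (k+1)) atTop (𝓝 qbar) := by
    have h1 : Tendsto (fun k => mulVecE Aᵀ y + η k) atTop (𝓝 (mulVecE Aᵀ y + ηbar)) :=
      tendsto_const_nhds.add hconv
    have h2 := ((continuous_mulVecE N⁻¹).tendsto _).comp h1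
    rw [← hqbar] at h2
    exact h2.congr fun k => (hq k).symm
  have hη1 : Tendsto (fun k => η (k+1)) atTop (𝓝 ηbar) := (tendsto_add_atTop_iff_nat 1).2 hconv
  have hpk : ∀ k, p (k+1) = (2*σ)⁻¹ • (η (k+1) - η k) + q (k+1) := by
    intro k
    rw [hη k, add_sub_cancel_left, smul_smul, inv_mul_cancel₀ h2σ, one_smul, sub_add_cancel]
  have hp1 : Tendsto (fun k => p (k+1)) atTop (𝓝 qbar) := by
    have h := ((hη1.sub hconv).const_smul ((2*σ)⁻¹)).add hq1
    simp only [sub_self, smul_zero, zero_add] at h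
    exact h.congr fun k => (hpk k).symm
  have hw1 : Tendsto w atTop (𝓝 wstar) := by
    rw [← tendsto_add_atTop_iff_nat 1]
    have h := hconv.sub (hq1.const_smul σ)
    rw [← hwstar] at h
    exact h.congr fun k => (hw k).symm
  have hx1 : Tendsto x atTop (𝓝 wstar) := by
    rw [← tendsto_add_atTop_iff_nat 1]
    have h := (hconv.add (hp1.const_smul σ)).sub (hq1.const_smul (2*σ))
    have he : ηbar + σ • qbar - (2*σ) • qbar = wstar := by rw [hwstar]; module
    rw [he] at h
    exact h.congr fun k => (hx k).symm
  -- ### Limit point of the prox step ###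
  set c : ℝ := 1 / (2 * σ⁻¹) with hcdef
  have hcpos : 0 < c := by rw [hcdef]; positivity
  have h2c : 2 * c = σ := by rw [hcdef]; field_simp
  set vbar : Vec n := σ⁻¹ • ((2*σ) • qbar - ηbar) with hvbar
  have hv1 : Tendsto (fun k => σ⁻¹ • ((2*σ) • q (k+1) - η k)) atTop (𝓝 vbar) := by
    have h := ((hq1.const_smul (2*σ)).sub hconv).const_smul σ⁻¹
    rwa [← hvbar] at h
  have hS : ∀ z : Vec n, g z ≠ ⊤ →
      g qbar ≤ (((g z).toReal + c * ‖z - vbar‖^2 - c * ‖qbar - vbar‖^2 : ℝ) : EReal) := by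
    intro z hz
    by_contra hcon
    push_neg at hcon
    obtain ⟨y', h1, h2⟩ := EReal.exists_between_coe_real hcon
    have hev : ∀ᶠ k in atTop, (y' : EReal) < g (p (k+1)) :=
      hp1.eventually (hg_lsc qbar (y' : EReal) h2)
    have hSk : ∀ k, g (p (k+1)) ≤
        (((g z).toReal + c * ‖z - σ⁻¹ • ((2*σ) • q (k+1) - η k)‖^2
          - c * ‖p (k+1) - σ⁻¹ • ((2*σ) • q (k+1) - η k)‖^2 : ℝ) : EReal) := by
      intro k
      have h3 := hp k z
      rw [show g z = (((g z).toReal : ℝ) : EReal) from (EReal.coe_toReal hz (hg_nbot z)).symm,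
        ← EReal.coe_add] at h3
      exact ereal_le_coe_of_add_coe_le h3
    have hT : Tendsto (fun k => (g z).toReal + c * ‖z - σ⁻¹ • ((2*σ) • q (k+1) - η k)‖^2
          - c * ‖p (k+1) - σ⁻¹ • ((2*σ) • q (k+1) - η k)‖^2) atTop
        (𝓝 ((g z).toReal + c * ‖z - vbar‖^2 - c * ‖qbar - vbar‖^2)) := by
      exact (tendsto_const_nhds.add (((tendsto_const_nhds.sub hv1).norm.pow 2).const_mul c)).sub
        (((hp1.sub hv1).norm.pow 2).const_mul c)
    have hle : y' ≤ (g z).toReal + c * ‖z - vbar‖^2 - c * ‖qbar - vbar‖^2 := by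
      refine ge_of_tendsto hT ?_
      filter_upwards [hev] with k hk
      have h5 := lt_of_lt_of_le hk (hSk k)
      exact_mod_cast h5.le
    exact absurd h1 (not_lt.mpr (EReal.coe_le_coe_iff.mpr hle)).elim
  have hgq_ne_top : g qbar ≠ ⊤ := by
    intro h
    have := hS z₀ hz₀
    rw [h] at this
    exact (EReal.coe_ne_top _) (top_le_iff.mp this)
  set gq : ℝ := (g qbar).toReal with hgqdef
  have hgq : g qbar = (gq : EReal) := (EReal.coe_toReal hgq_ne_top (hg_nbot qbar)).symm
  have hSr : ∀ z : Vec n, g z ≠ ⊤ →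
      gq + c * ‖qbar - vbar‖^2 ≤ (g z).toReal + c * ‖z - vbar‖^2 := by
    intro z hz
    have h := hS z hz
    rw [hgq, EReal.coe_le_coe_iff] at h
    linarith
  -- ### Subgradient inequality for g ###
  have hsw : σ • (qbar - vbar) = wstar := by
    rw [hvbar, hwstar, smul_sub, smul_smul, mul_inv_cancel₀ hσ', one_smul]
    module
  have hsubgR : ∀ z : Vec n, g z ≠ ⊤ →
      gq + (inner ℝ (-wstar) (z - qbar) : ℝ) ≤ (g z).toReal := by
    intro z hz
    set gz : ℝ := (g z).toReal with hgzdef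
    have hgz : g z = (gz : EReal) := (EReal.coe_toReal hz (hg_nbot z)).symm
    have key : ∀ t : ℝ, 0 < t → t ≤ 1 →
        gq ≤ gz + 2*c*(inner ℝ (qbar - vbar) (z - qbar) : ℝ) + c * t * ‖z - qbar‖^2 := by
      intro t ht ht1
      set zt : Vec n := qbar + t • (z - qbar) with hzt
      have hzt' : zt = (1-t) • qbar + t • z := by rw [hzt]; module
      have hconv' := hg_convex qbar z (1-t) t (by linarith) ht.le (by ring)
      rw [← hzt', hgq, hgz, ← EReal.coe_mul, ← EReal.coe_mul, ← EReal.coe_add] at hconv'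
      have hztop : g zt ≠ ⊤ := ne_top_of_le_ne_top (EReal.coe_ne_top _) hconv'
      have h3 := hSr zt hztop
      have h4 : (g zt).toReal ≤ (1-t)*gq + t*gz := by
        have := EReal.toReal_le_toReal hconv' (hg_nbot zt) (EReal.coe_ne_top _)
        rwa [EReal.toReal_coe] at this
      have hexp : ‖zt - vbar‖^2 = ‖qbar - vbar‖^2
          + 2*t*(inner ℝ (qbar - vbar) (z - qbar) : ℝ) + t^2*‖z - qbar‖^2 := by
        have hd : zt - vbar = (qbar - vbar) + t • (z - qbar) := by rw [hzt]; module
        rw [hd, norm_add_sq_real, real_inner_smul_right, norm_smul, mul_pow,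
          Real.norm_eq_abs, sq_abs]
        ring
      rw [hexp] at h3
      have h5 : t * gq ≤ t * (gz + 2*c*(inner ℝ (qbar - vbar) (z - qbar) : ℝ)
          + c * t * ‖z - qbar‖^2) := by nlinarith
      exact le_of_mul_le_mul_left h5 ht
    have hT : Tendsto (fun k : ℕ => gz + 2*c*(inner ℝ (qbar - vbar) (z - qbar) : ℝ)
          + c * (1/(k+1:ℝ)) * ‖z - qbar‖^2) atTop
        (𝓝 (gz + 2*c*(inner ℝ (qbar - vbar) (z - qbar) : ℝ) + c * 0 * ‖z - qbar‖^2)) := by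
      exact tendsto_const_nhds.add
        (((tendsto_one_div_add_atTop_nhds_zero_nat.const_mul c)).mul_const _)
    have hle : gq ≤ gz + 2*c*(inner ℝ (qbar - vbar) (z - qbar) : ℝ) + c * 0 * ‖z - qbar‖^2 := by
      refine ge_of_tendsto' hT fun k => key (1/(k+1:ℝ)) (by positivity) ?_
      rw [div_le_one (by positivity)]
      linarith [Nat.cast_nonneg (α := ℝ) k]
    have hid : 2*c*(inner ℝ (qbar - vbar) (z - qbar) : ℝ) = (inner ℝ wstar (z - qbar) : ℝ) := by
      rw [h2c, ← real_inner_smul_left, hsw]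
    rw [hid] at hle
    have hnn : (inner ℝ (-wstar) (z - qbar) : ℝ) = - (inner ℝ wstar (z - qbar) : ℝ) :=
      inner_neg_left _ _
    linarith
  -- ### Subgradient inequality for f ###
  have hwstar_eq : wstar = mulVecE Aᵀ (mulVecE A qbar - y) := by
    have h := hNq
    rw [hNdef, matE_add, matE_mul, matE_smul_one] at h
    rw [hwstar, mulVecE_sub]
    calc ηbar - σ • qbar
        = (mulVecE Aᵀ y + ηbar) - (mulVecE Aᵀ y + σ • qbar) := by abel
      _ = (mulVecE Aᵀ (mulVecE A qbar) + σ • qbar) - (mulVecE Aᵀ y + σ • qbar) := by rw [h]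
      _ = mulVecE Aᵀ (mulVecE A qbar) - mulVecE Aᵀ y := by abel
  have hsubfR : ∀ z : Vec n, f qbar + (inner ℝ wstar (z - qbar) : ℝ) ≤ f z := by
    intro z
    have hinner : (inner ℝ wstar (z - qbar) : ℝ)
        = inner ℝ (mulVecE A qbar - y) (mulVecE A z - mulVecE A qbar) := by
      rw [hwstar_eq, inner_mulVecE_transpose, mulVecE_sub]
    set a : Vec m := y - mulVecE A qbar with ha
    set b : Vec m := mulVecE A z - mulVecE A qbar with hb
    have hyz : y - mulVecE A z = a - b := by rw [ha, hb]; abel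
    have hab : mulVecE A qbar - y = -a := by rw [ha]; abel
    have hinner2 : (inner ℝ (mulVecE A qbar - y) b : ℝ) = - inner ℝ a b := by
      rw [hab, inner_neg_left]
    have e1 : f z = 1/2*‖a - b‖^2 := by rw [hf z, hyz]
    have e2 : f qbar = 1/2*‖a‖^2 := by rw [hf qbar, ← ha]
    have e3 : ‖a - b‖^2 = ‖a‖^2 - 2*(inner ℝ a b : ℝ) + ‖b‖^2 := norm_sub_sq_real a b
    rw [e1, e2, hinner, hinner2, e3]
    have hbn : (0:ℝ) ≤ ‖b‖^2 := by positivity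
    linarith
  -- ### Fenchel conjugate values ###
  have hGstar : fenchelE g (-wstar) = (((inner ℝ (-wstar) qbar : ℝ) - gq : ℝ) : EReal) := by
    apply le_antisymm
    · apply iSup_le
      intro z
      by_cases hz : g z = ⊤
      · rw [hz, EReal.sub_top]
        exact bot_le
      · rw [show g z = (((g z).toReal : ℝ) : EReal) from (EReal.coe_toReal hz (hg_nbot z)).symm,
          ← EReal.coe_sub, EReal.coe_le_coe_iff]
        have h := hsubgR z hz
        have hir : (inner ℝ (-wstar) (z - qbar) : ℝ) = inner ℝ (-wstar) z - inner ℝ (-wstar) qbar :=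
          inner_sub_right _ _ _
        linarith
    · refine le_iSup_of_le qbar ?_
      rw [hgq, ← EReal.coe_sub]
  have hFstar : fenchelE (fun v => ((f v : ℝ) : EReal)) wstar
      = (((inner ℝ wstar qbar : ℝ) - f qbar : ℝ) : EReal) := by
    apply le_antisymm
    · apply iSup_le
      intro z
      rw [← EReal.coe_sub, EReal.coe_le_coe_iff]
      have h := hsubfR z
      have hir : (inner ℝ wstar (z - qbar) : ℝ) = inner ℝ wstar z - inner ℝ wstar qbar :=
        inner_sub_right _ _ _
      linarith
    · refine le_iSup_of_le qbar ?_
      rw [← EReal.coe_sub]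
  -- ### Membership in the subdifferential sum ###
  have mem1 : -qbar ∈ subdiffE (fun v => fenchelE g (-v)) wstar := by
    intro z
    have hge : (((inner ℝ (-z) qbar : ℝ) - gq : ℝ) : EReal) ≤ fenchelE g (-z) := by
      refine le_iSup_of_le qbar ?_
      rw [hgq, ← EReal.coe_sub]
    refine le_trans (le_of_eq ?_) hge
    show fenchelE g (-wstar) + (((inner ℝ (-qbar) (z - wstar) : ℝ)) : EReal) = _
    rw [hGstar, ← EReal.coe_add, EReal.coe_eq_coe_iff]
    have e1 : (inner ℝ (-qbar) (z - wstar) : ℝ) = inner ℝ qbar wstar - inner ℝ qbar z := by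
      rw [inner_neg_left, inner_sub_right]; ring
    have e2 : (inner ℝ (-wstar) qbar : ℝ) = - inner ℝ wstar qbar := inner_neg_left _ _
    have e3 : (inner ℝ (-z) qbar : ℝ) = - inner ℝ z qbar := inner_neg_left _ _
    rw [e1, e2, e3, real_inner_comm qbar wstar, real_inner_comm z qbar]
    ring
  have mem2 : qbar ∈ subdiffE (fenchelE (fun v => ((f v : ℝ) : EReal))) wstar := by
    intro z
    have hge : (((inner ℝ z qbar : ℝ) - f qbar : ℝ) : EReal)
        ≤ fenchelE (fun v => ((f v : ℝ) : EReal)) z := by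
      refine le_iSup_of_le qbar ?_
      rw [← EReal.coe_sub]
    refine le_trans (le_of_eq ?_) hge
    rw [hFstar, ← EReal.coe_add, EReal.coe_eq_coe_iff]
    have e1 : (inner ℝ qbar (z - wstar) : ℝ) = inner ℝ qbar z - inner ℝ qbar wstar :=
      inner_sub_right _ _ _
    rw [e1, real_inner_comm qbar wstar, real_inner_comm z qbar]
    ring
  -- ### Conclusion ###
  refine ⟨wstar, hw1, hx1, ?_, ?_⟩
  · have h0 : (0 : Vec n) = -qbar + qbar := by simp
    rw [h0]
    exact Set.add_mem_add mem1 mem2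
  · intro w'
    have h1 : (((inner ℝ (-w') qbar : ℝ) - gq : ℝ) : EReal) ≤ fenchelE g (-w') := by
      refine le_iSup_of_le qbar ?_
      rw [hgq, ← EReal.coe_sub]
    have h2 : (((inner ℝ w' qbar : ℝ) - f qbar : ℝ) : EReal)
        ≤ fenchelE (fun v => ((f v : ℝ) : EReal)) w' := by
      refine le_iSup_of_le qbar ?_
      rw [← EReal.coe_sub]
    have hn1 : -fenchelE g (-w') ≤ ((-( (inner ℝ (-w') qbar : ℝ) - gq) : ℝ) : EReal) := by
      rw [EReal.coe_neg]
      exact EReal.neg_le_neg_iff.mpr h1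
    have hn2 : -fenchelE (fun v => ((f v : ℝ) : EReal)) w'
        ≤ ((-( (inner ℝ w' qbar : ℝ) - f qbar) : ℝ) : EReal) := by
      rw [EReal.coe_neg]
      exact EReal.neg_le_neg_iff.mpr h2
    calc -fenchelE g (-w') - fenchelE (fun v => ((f v : ℝ) : EReal)) w'
        = -fenchelE g (-w') + -(fenchelE (fun v => ((f v : ℝ) : EReal)) w') := by
          rw [sub_eq_add_neg]
      _ ≤ ((-( (inner ℝ (-w') qbar : ℝ) - gq) : ℝ) : EReal)
            + ((-( (inner ℝ w' qbar : ℝ) - f qbar) : ℝ) : EReal) := add_le_add hn1 hn2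
      _ = ((gq + f qbar : ℝ) : EReal) := by
          rw [← EReal.coe_add, EReal.coe_eq_coe_iff]
          have e : (inner ℝ (-w') qbar : ℝ) = - inner ℝ w' qbar := inner_neg_left _ _
          rw [e]; ring
      _ = -fenchelE g (-wstar) - fenchelE (fun v => ((f v : ℝ) : EReal)) wstar := by
          rw [hGstar, hFstar, ← EReal.coe_neg, ← EReal.coe_sub, EReal.coe_eq_coe_iff]
          have e : (inner ℝ (-wstar) qbar : ℝ) = - inner ℝ wstar qbar := inner_neg_left _ _
          rw [e]; ring
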